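/- Let w* and w be measurable weights on [-1,1] with (1+ε)^{-1} ≤ w/w* ≤ 1+ε pointwise on [-1,1] for some ε ∈ (0, 1/2), and let K_n, K_n* be the reproducing kernels of w dx and w* dx respectively. Then for all x, y ∈ [-1,1], |K_n(x,y) - K_n*(x,y)|/K_n*(x,x) ≤ √(2ε) · (K_n*(y,y)/K_n*(x,x))^{1/2}. -/

import Mathlib

open MeasureTheory Set Finset

/-- The reproducing kernel built from orthonormal polynomials. -/
noncomputable def kern (p : ℕ → Polynomial ℝ) (n : ℕ) (x y : ℝ) : ℝ :=
  ∑ k ∈ Finset.range n, (p k).eval x * (p k).eval y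

namespace SKI

open Polynomial

lemma kern_nonneg (q : ℕ → Polynomial ℝ) (n : ℕ) (z : ℝ) : 0 ≤ kern q n z z :=
  Finset.sum_nonneg fun _ _ => mul_self_nonneg _

lemma int_cont {v : ℝ → ℝ} (hvm : Measurable v) (hv : IntegrableOn v (Icc (-1:ℝ) 1))
    {g : ℝ → ℝ} (hg : Continuous g) :
    IntegrableOn (fun t => g t * v t) (Icc (-1:ℝ) 1) := by
  obtain ⟨C, hC⟩ := isCompact_Icc.exists_bound_of_continuousOn hg.continuousOn
  refine Integrable.mono' (hv.abs.const_mul C) ?_ ?_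
  · exact (hg.measurable.mul hvm).aestronglyMeasurable
  · filter_upwards [ae_restrict_mem measurableSet_Icc] with t ht
    rw [Real.norm_eq_abs, abs_mul]
    exact mul_le_mul_of_nonneg_right (by simpa using hC t ht) (abs_nonneg _)

lemma weight_integrable {v : ℝ → ℝ} {q : ℕ → Polynomial ℝ} (hvm : Measurable v)
    (h0 : (q 0).natDegree = 0)
    (h1 : (∫ t in Icc (-1:ℝ) 1, (q 0).eval t * (q 0).eval t * v t) = 1) :
    IntegrableOn v (Icc (-1:ℝ) 1) := by
  set c := (q 0).coeff 0 with hc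
  have hq : q 0 = C c := eq_C_of_natDegree_eq_zero h0
  rw [hq] at h1
  simp only [eval_C] at h1
  have hcc : c ≠ 0 := by intro hc0; rw [hc0] at h1; simp at h1
  have hint : Integrable (fun t => c * c * v t) (volume.restrict (Icc (-1:ℝ) 1)) := by
    by_contra h
    rw [integral_undef h] at h1
    norm_num at h1
  have h2 := hint.const_mul ((c*c)⁻¹)
  have h3 : (fun t => (c*c)⁻¹ * (c * c * v t)) = v := by
    funext t
    field_simp
  rwa [h3] at h2

lemma integral_comb {v : ℝ → ℝ} {n : ℕ} {q : ℕ → Polynomial ℝ}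
    (hvm : Measurable v) (hv : IntegrableOn v (Icc (-1:ℝ) 1))
    (c : ℕ → ℝ) {g : ℝ → ℝ} (hg : Continuous g) :
    (∫ t in Icc (-1:ℝ) 1, (∑ k ∈ range n, c k • q k).eval t * g t * v t)
      = ∑ k ∈ range n, c k * ∫ t in Icc (-1:ℝ) 1, (q k).eval t * g t * v t := by
  have h1 : ∀ t, (∑ k ∈ range n, c k • q k).eval t * g t * v t
      = ∑ k ∈ range n, c k * ((q k).eval t * g t * v t) := by
    intro t
    rw [eval_finset_sum, Finset.sum_mul, Finset.sum_mul]
    refine Finset.sum_congr rfl fun k _ => ?_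
    rw [eval_smul, smul_eq_mul]
    ring
  simp only [h1]
  rw [integral_finset_sum _ (fun k _ => ?_)]
  · refine Finset.sum_congr rfl fun k _ => ?_
    exact MeasureTheory.integral_const_mul (c k) _
  · have := (int_cont hvm hv (((q k).continuous).mul hg)).const_mul (c k)
    simpa [mul_assoc] using this

lemma coeff_eq {v : ℝ → ℝ} {n : ℕ} {q : ℕ → Polynomial ℝ}
    (hvm : Measurable v) (hv : IntegrableOn v (Icc (-1:ℝ) 1))
    (horth : ∀ j k, (∫ t in Icc (-1:ℝ) 1, (q j).eval t * (q k).eval t * v t)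
        = if j = k then 1 else 0)
    (c : ℕ → ℝ) {j : ℕ} (hj : j ∈ range n) :
    (∫ t in Icc (-1:ℝ) 1, (∑ k ∈ range n, c k • q k).eval t * (q j).eval t * v t) = c j := by
  rw [integral_comb hvm hv c ((q j).continuous)]
  have h1 : ∀ k, (∫ t in Icc (-1:ℝ) 1, (q k).eval t * (q j).eval t * v t)
      = if k = j then 1 else 0 := fun k => horth k j
  simp only [h1]
  rw [Finset.sum_eq_single j (fun k _ hk => by simp [hk]) (fun h => absurd hj h)]
  simp

lemma pair_integral {v : ℝ → ℝ} {n : ℕ} {q : ℕ → Polynomial ℝ}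
    (hvm : Measurable v) (hv : IntegrableOn v (Icc (-1:ℝ) 1))
    (horth : ∀ j k, (∫ t in Icc (-1:ℝ) 1, (q j).eval t * (q k).eval t * v t)
        = if j = k then 1 else 0)
    (c d : ℕ → ℝ) :
    (∫ t in Icc (-1:ℝ) 1,
        (∑ k ∈ range n, c k • q k).eval t * (∑ k ∈ range n, d k • q k).eval t * v t)
      = ∑ k ∈ range n, c k * d k := by
  rw [integral_comb hvm hv c ((∑ k ∈ range n, d k • q k).continuous)]
  refine Finset.sum_congr rfl fun k hk => ?_
  congr 1
  have h1 : ∀ t, (q k).eval t * (∑ j ∈ range n, d j • q j).eval t * v t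
      = (∑ j ∈ range n, d j • q j).eval t * (q k).eval t * v t := fun t => by ring
  simp only [h1]
  exact coeff_eq hvm hv horth d hk

lemma q_mem_degreeLT {n : ℕ} {q : ℕ → Polynomial ℝ} (hdq : ∀ k, (q k).natDegree = k)
    {k : ℕ} (hk : k < n) : q k ∈ degreeLT ℝ n := by
  rw [mem_degreeLT]
  refine lt_of_le_of_lt degree_le_natDegree ?_
  rw [hdq]
  exact_mod_cast hk

lemma exists_repr {v : ℝ → ℝ} {n : ℕ} {q : ℕ → Polynomial ℝ}
    (hvm : Measurable v) (hv : IntegrableOn v (Icc (-1:ℝ) 1))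
    (horth : ∀ j k, (∫ t in Icc (-1:ℝ) 1, (q j).eval t * (q k).eval t * v t)
        = if j = k then 1 else 0)
    (hdq : ∀ k, (q k).natDegree = k)
    {f : Polynomial ℝ} (hf : f ∈ degreeLT ℝ n) :
    ∃ c : ℕ → ℝ, f = ∑ k ∈ range n, c k • q k := by
  rcases Nat.eq_zero_or_pos n with rfl | hn
  · refine ⟨fun _ => 0, ?_⟩
    rw [mem_degreeLT] at hf
    simp only [Nat.cast_zero] at hf
    rw [Nat.WithBot.lt_zero_iff, degree_eq_bot] at hf
    simp [hf]
  haveI : Nonempty (Fin n) := ⟨⟨0, hn⟩⟩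
  haveI : FiniteDimensional ℝ (degreeLT ℝ n) :=
    Module.Finite.equiv (degreeLTEquiv ℝ n).symm
  set e : Fin n → degreeLT ℝ n := fun k => ⟨q k, q_mem_degreeLT hdq k.2⟩ with he
  have hind : LinearIndependent ℝ e := by
    rw [Fintype.linearIndependent_iff]
    intro g hg i
    set G : ℕ → ℝ := fun k => if h : k < n then g ⟨k, h⟩ else 0 with hG
    have hsum : (∑ k ∈ range n, G k • q k) = 0 := by
      have h1 : (∑ k ∈ range n, G k • q k) = ∑ i : Fin n, g i • q i := by
        rw [← Fin.sum_univ_eq_sum_range (fun k => G k • q k)]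
        refine Finset.sum_congr rfl fun i _ => ?_
        simp [hG, i.2]
      have h2 := congrArg Subtype.val hg
      simp only [Submodule.coe_sum, Submodule.coe_smul, he, ZeroMemClass.coe_zero] at h2
      rw [h1, h2]
    have h3 := coeff_eq hvm hv horth G (Finset.mem_range.2 i.2)
    rw [hsum] at h3
    simp only [eval_zero, zero_mul] at h3
    rw [integral_zero] at h3
    have h4 : G i = g i := by simp [hG, i.2]
    rw [h4] at h3
    exact h3.symm
  have hcard : Fintype.card (Fin n) = Module.finrank ℝ (degreeLT ℝ n) := by
    rw [Fintype.card_fin, (degreeLTEquiv ℝ n).finrank_eq, Module.finrank_fin_fun]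
  set b := basisOfLinearIndependentOfCardEqFinrank hind hcard with hb
  have hbe : ⇑b = e := coe_basisOfLinearIndependentOfCardEqFinrank hind hcard
  have hrepr := b.sum_repr ⟨f, hf⟩
  refine ⟨fun k => if h : k < n then b.repr ⟨f, hf⟩ ⟨k, h⟩ else 0, ?_⟩
  have h5 := congrArg Subtype.val hrepr
  simp only [Submodule.coe_sum, Submodule.coe_smul, hbe, he] at h5
  calc f = ∑ i : Fin n, (b.repr ⟨f, hf⟩) i • q ↑i := h5.symm
    _ = ∑ k ∈ range n, (if h : k < n then b.repr ⟨f, hf⟩ ⟨k, h⟩ else 0) • q k := by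
        rw [← Fin.sum_univ_eq_sum_range
          (fun k => (if h : k < n then b.repr ⟨f, hf⟩ ⟨k, h⟩ else 0) • q k)]
        exact Finset.sum_congr rfl fun i _ => by simp [i.2]

lemma reproducing {v : ℝ → ℝ} {n : ℕ} {q : ℕ → Polynomial ℝ}
    (hvm : Measurable v) (hv : IntegrableOn v (Icc (-1:ℝ) 1))
    (horth : ∀ j k, (∫ t in Icc (-1:ℝ) 1, (q j).eval t * (q k).eval t * v t)
        = if j = k then 1 else 0)
    (hdq : ∀ k, (q k).natDegree = k)
    {f : Polynomial ℝ} (hf : f ∈ degreeLT ℝ n) (x : ℝ) :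
    (∫ t in Icc (-1:ℝ) 1,
        (∑ k ∈ range n, ((q k).eval x) • q k).eval t * f.eval t * v t) = f.eval x := by
  obtain ⟨c, rfl⟩ := exists_repr hvm hv horth hdq hf
  rw [pair_integral hvm hv horth]
  rw [eval_finset_sum]
  refine Finset.sum_congr rfl fun k _ => ?_
  rw [eval_smul, smul_eq_mul]
  ring

lemma eval_sq_le {v : ℝ → ℝ} {n : ℕ} {q : ℕ → Polynomial ℝ}
    (hvm : Measurable v) (hv : IntegrableOn v (Icc (-1:ℝ) 1))
    (horth : ∀ j k, (∫ t in Icc (-1:ℝ) 1, (q j).eval t * (q k).eval t * v t)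
        = if j = k then 1 else 0)
    (hdq : ∀ k, (q k).natDegree = k)
    {f : Polynomial ℝ} (hf : f ∈ degreeLT ℝ n) (y : ℝ) :
    (f.eval y)^2 ≤ kern q n y y * ∫ t in Icc (-1:ℝ) 1, f.eval t * f.eval t * v t := by
  obtain ⟨c, rfl⟩ := exists_repr hvm hv horth hdq hf
  rw [pair_integral hvm hv horth]
  have h1 : (∑ k ∈ range n, c k • q k).eval y = ∑ k ∈ range n, (q k).eval y * c k := by
    rw [eval_finset_sum]
    exact Finset.sum_congr rfl fun k _ => by rw [eval_smul, smul_eq_mul]; ring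
  have h2 : kern q n y y = ∑ k ∈ range n, ((q k).eval y)^2 := by
    unfold kern
    exact Finset.sum_congr rfl fun k _ => (sq ((q k).eval y)).symm
  have h3 : (∑ k ∈ range n, c k * c k) = ∑ k ∈ range n, (c k)^2 :=
    Finset.sum_congr rfl fun k _ => (sq (c k)).symm
  rw [h1, h2, h3]
  exact Finset.sum_mul_sq_le_sq_mul_sq (range n) (fun k => (q k).eval y) c

lemma kernel_mem {n : ℕ} {q : ℕ → Polynomial ℝ} (hdq : ∀ k, (q k).natDegree = k) (x : ℝ) :
    (∑ k ∈ range n, ((q k).eval x) • q k) ∈ degreeLT ℝ n :=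
  Submodule.sum_mem _ fun k hk =>
    Submodule.smul_mem _ _ (q_mem_degreeLT hdq (Finset.mem_range.1 hk))

lemma kernel_eval {n : ℕ} (q : ℕ → Polynomial ℝ) (x y : ℝ) :
    (∑ k ∈ range n, ((q k).eval x) • q k).eval y = kern q n x y := by
  rw [eval_finset_sum]
  exact Finset.sum_congr rfl fun k _ => by rw [eval_smul, smul_eq_mul]

noncomputable def kpol (q : ℕ → Polynomial ℝ) (n : ℕ) (x : ℝ) : Polynomial ℝ :=
  ∑ k ∈ range n, ((q k).eval x) • q k

lemma kpol_mem {n : ℕ} {q : ℕ → Polynomial ℝ} (hdq : ∀ k, (q k).natDegree = k) (x : ℝ) :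
    kpol q n x ∈ degreeLT ℝ n := kernel_mem hdq x

lemma kpol_eval (q : ℕ → Polynomial ℝ) (n : ℕ) (x y : ℝ) :
    (kpol q n x).eval y = kern q n x y := kernel_eval q x y

lemma kpol_reproducing {v : ℝ → ℝ} {n : ℕ} {q : ℕ → Polynomial ℝ}
    (hvm : Measurable v) (hv : IntegrableOn v (Icc (-1:ℝ) 1))
    (horth : ∀ j k, (∫ t in Icc (-1:ℝ) 1, (q j).eval t * (q k).eval t * v t)
        = if j = k then 1 else 0)
    (hdq : ∀ k, (q k).natDegree = k)
    {f : Polynomial ℝ} (hf : f ∈ degreeLT ℝ n) (x : ℝ) :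
    (∫ t in Icc (-1:ℝ) 1, (kpol q n x).eval t * f.eval t * v t) = f.eval x :=
  reproducing hvm hv horth hdq hf x

end SKI

/-- If the weights `w` and `w*` satisfy `(1+ε)⁻¹ ≤ w/w* ≤ 1+ε` on `[-1,1]`, then
`|K_n(x,y) - K_n*(x,y)|/K_n*(x,x) ≤ √(2ε) (K_n*(y,y)/K_n*(x,x))^{1/2}`. -/
theorem smoothing_kernel_inequality
    (w ws : ℝ → ℝ) (hwmeas : Measurable w) (hwsmeas : Measurable ws)
    (hwspos : ∀ t ∈ Icc (-1:ℝ) 1, 0 < ws t)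
    (ε : ℝ) (hε : ε ∈ Ioo (0:ℝ) (1/2))
    (hratio : ∀ t ∈ Icc (-1:ℝ) 1, (1 + ε)⁻¹ ≤ w t / ws t ∧ w t / ws t ≤ 1 + ε)
    (n : ℕ) (p ps : ℕ → Polynomial ℝ)
    (hdeg : ∀ k, (p k).natDegree = k) (hdegs : ∀ k, (ps k).natDegree = k)
    (horth : ∀ j k, (∫ t in Icc (-1:ℝ) 1, (p j).eval t * (p k).eval t * w t)
        = if j = k then 1 else 0)
    (horths : ∀ j k, (∫ t in Icc (-1:ℝ) 1, (ps j).eval t * (ps k).eval t * ws t)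
        = if j = k then 1 else 0)
    (x y : ℝ) (hx : x ∈ Icc (-1:ℝ) 1) (hy : y ∈ Icc (-1:ℝ) 1) :
    |kern p n x y - kern ps n x y| / kern ps n x x ≤
      Real.sqrt (2 * ε) * Real.sqrt (kern ps n y y / kern ps n x x) := by
  have hε0 : (0:ℝ) < ε := hε.1
  have hε2 : ε < 1/2 := hε.2
  have h1ε : (0:ℝ) < 1 + ε := by linarith
  -- pointwise weight comparisons on [-1,1]
  have hwslew : ∀ t ∈ Icc (-1:ℝ) 1, ws t ≤ (1+ε) * w t := by
    intro t ht
    have h := (hratio t ht).1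
    have hs := hwspos t ht
    rw [le_div_iff₀ hs] at h
    calc ws t = ((1+ε) * (1+ε)⁻¹) * ws t := by rw [mul_inv_cancel₀ h1ε.ne', one_mul]
      _ = (1+ε) * ((1+ε)⁻¹ * ws t) := by ring
      _ ≤ (1+ε) * w t := mul_le_mul_of_nonneg_left h h1ε.le
  have hwlews : ∀ t ∈ Icc (-1:ℝ) 1, w t ≤ (1+ε) * ws t := by
    intro t ht
    have h := (hratio t ht).2
    have hs := hwspos t ht
    rw [div_le_iff₀ hs] at h
    linarith [h]
  -- integrability of the weights
  have hwint : IntegrableOn w (Icc (-1:ℝ) 1) :=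
    SKI.weight_integrable hwmeas (hdeg 0) (by simpa using horth 0 0)
  have hwsint : IntegrableOn ws (Icc (-1:ℝ) 1) :=
    SKI.weight_integrable hwsmeas (hdegs 0) (by simpa using horths 0 0)
  -- the kernel polynomials
  have hKxmem : SKI.kpol p n x ∈ Polynomial.degreeLT ℝ n := SKI.kpol_mem hdeg x
  have hKsxmem : SKI.kpol ps n x ∈ Polynomial.degreeLT ℝ n := SKI.kpol_mem hdegs x
  have hPmem : SKI.kpol p n x - SKI.kpol ps n x ∈ Polynomial.degreeLT ℝ n :=
    Submodule.sub_mem _ hKxmem hKsxmem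
  have hA0 : 0 ≤ kern p n x x := SKI.kern_nonneg p n x
  have hB0 : 0 ≤ kern ps n x x := SKI.kern_nonneg ps n x
  have hBy0 : 0 ≤ kern ps n y y := SKI.kern_nonneg ps n y
  -- F1 : ∫ Kx Kx w = kern p n x x
  have hF1 : (∫ t in Icc (-1:ℝ) 1,
      (SKI.kpol p n x).eval t * (SKI.kpol p n x).eval t * w t) = kern p n x x :=
    (SKI.kpol_reproducing hwmeas hwint horth hdeg hKxmem x).trans (SKI.kpol_eval p n x x)
  -- F2 : ∫ Ksx Ksx ws = kern ps n x x
  have hF2 : (∫ t in Icc (-1:ℝ) 1,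
      (SKI.kpol ps n x).eval t * (SKI.kpol ps n x).eval t * ws t) = kern ps n x x :=
    (SKI.kpol_reproducing hwsmeas hwsint horths hdegs hKsxmem x).trans (SKI.kpol_eval ps n x x)
  -- F3 : ∫ Ksx Kx ws = kern p n x x
  have hF3 : (∫ t in Icc (-1:ℝ) 1,
      (SKI.kpol ps n x).eval t * (SKI.kpol p n x).eval t * ws t) = kern p n x x :=
    (SKI.kpol_reproducing hwsmeas hwsint horths hdegs hKxmem x).trans (SKI.kpol_eval p n x x)
  -- integrability of the various integrands
  have iKKws : IntegrableOn
      (fun t => (SKI.kpol p n x).eval t * (SKI.kpol p n x).eval t * ws t) (Icc (-1:ℝ) 1) :=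
    SKI.int_cont hwsmeas hwsint ((SKI.kpol p n x).continuous.mul (SKI.kpol p n x).continuous)
  have iKKw : IntegrableOn
      (fun t => (SKI.kpol p n x).eval t * (SKI.kpol p n x).eval t * w t) (Icc (-1:ℝ) 1) :=
    SKI.int_cont hwmeas hwint ((SKI.kpol p n x).continuous.mul (SKI.kpol p n x).continuous)
  have iSSw : IntegrableOn
      (fun t => (SKI.kpol ps n x).eval t * (SKI.kpol ps n x).eval t * w t) (Icc (-1:ℝ) 1) :=
    SKI.int_cont hwmeas hwint ((SKI.kpol ps n x).continuous.mul (SKI.kpol ps n x).continuous)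
  have iSSws : IntegrableOn
      (fun t => (SKI.kpol ps n x).eval t * (SKI.kpol ps n x).eval t * ws t) (Icc (-1:ℝ) 1) :=
    SKI.int_cont hwsmeas hwsint ((SKI.kpol ps n x).continuous.mul (SKI.kpol ps n x).continuous)
  have iSKws : IntegrableOn
      (fun t => (SKI.kpol ps n x).eval t * (SKI.kpol p n x).eval t * ws t) (Icc (-1:ℝ) 1) :=
    SKI.int_cont hwsmeas hwsint ((SKI.kpol ps n x).continuous.mul (SKI.kpol p n x).continuous)
  -- F4 : ∫ Kx Kx ws ≤ (1+ε) kern p n x x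
  have hF4 : (∫ t in Icc (-1:ℝ) 1,
      (SKI.kpol p n x).eval t * (SKI.kpol p n x).eval t * ws t) ≤ (1+ε) * kern p n x x := by
    have mono := setIntegral_mono_on iKKws (iKKw.const_mul (1+ε)) measurableSet_Icc
      (fun t ht => by nlinarith [hwslew t ht, mul_self_nonneg ((SKI.kpol p n x).eval t)])
    rwa [MeasureTheory.integral_const_mul, hF1] at mono
  -- F5 : ∫ Ksx Ksx w ≤ (1+ε) kern ps n x x
  have hF5 : (∫ t in Icc (-1:ℝ) 1,
      (SKI.kpol ps n x).eval t * (SKI.kpol ps n x).eval t * w t) ≤ (1+ε) * kern ps n x x := by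
    have mono := setIntegral_mono_on iSSw (iSSws.const_mul (1+ε)) measurableSet_Icc
      (fun t ht => by nlinarith [hwlews t ht, mul_self_nonneg ((SKI.kpol ps n x).eval t)])
    rwa [MeasureTheory.integral_const_mul, hF2] at mono
  -- F6 : expansion of ∫ P P ws
  have hF6 : (∫ t in Icc (-1:ℝ) 1,
      (SKI.kpol p n x - SKI.kpol ps n x).eval t * (SKI.kpol p n x - SKI.kpol ps n x).eval t * ws t)
      = (∫ t in Icc (-1:ℝ) 1,
          (SKI.kpol p n x).eval t * (SKI.kpol p n x).eval t * ws t)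
        - 2 * kern p n x x + kern ps n x x := by
    have hPt : ∀ t : ℝ,
        (SKI.kpol p n x - SKI.kpol ps n x).eval t * (SKI.kpol p n x - SKI.kpol ps n x).eval t * ws t
        = ((SKI.kpol p n x).eval t * (SKI.kpol p n x).eval t * ws t
            - 2 * ((SKI.kpol ps n x).eval t * (SKI.kpol p n x).eval t * ws t))
          + (SKI.kpol ps n x).eval t * (SKI.kpol ps n x).eval t * ws t := by
      intro t
      rw [Polynomial.eval_sub]
      ring
    have i2' : IntegrableOn
        (fun t => 2 * ((SKI.kpol ps n x).eval t * (SKI.kpol p n x).eval t * ws t))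
        (Icc (-1:ℝ) 1) := iSKws.const_mul 2
    have iSub : IntegrableOn
        (fun t => (SKI.kpol p n x).eval t * (SKI.kpol p n x).eval t * ws t
          - 2 * ((SKI.kpol ps n x).eval t * (SKI.kpol p n x).eval t * ws t))
        (Icc (-1:ℝ) 1) := iKKws.sub i2'
    rw [show (fun t => (SKI.kpol p n x - SKI.kpol ps n x).eval t *
          (SKI.kpol p n x - SKI.kpol ps n x).eval t * ws t)
        = fun t => ((SKI.kpol p n x).eval t * (SKI.kpol p n x).eval t * ws t
            - 2 * ((SKI.kpol ps n x).eval t * (SKI.kpol p n x).eval t * ws t))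
          + (SKI.kpol ps n x).eval t * (SKI.kpol ps n x).eval t * ws t from funext hPt]
    rw [MeasureTheory.integral_add iSub iSSws,
        MeasureTheory.integral_sub iKKws i2',
        MeasureTheory.integral_const_mul, hF2, hF3]
  -- F7 : evaluation estimate for P at y
  have hPy : (SKI.kpol p n x - SKI.kpol ps n x).eval y = kern p n x y - kern ps n x y := by
    rw [Polynomial.eval_sub, SKI.kpol_eval, SKI.kpol_eval]
  have hF7 : (kern p n x y - kern ps n x y)^2 ≤ kern ps n y y * ∫ t in Icc (-1:ℝ) 1,
      (SKI.kpol p n x - SKI.kpol ps n x).eval t * (SKI.kpol p n x - SKI.kpol ps n x).eval t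
        * ws t := by
    have := SKI.eval_sq_le hwsmeas hwsint horths hdegs hPmem y
    rwa [hPy] at this
  -- F8 : evaluation estimate for Ksx at x w.r.t. w
  have hF8 : (kern ps n x x)^2 ≤ kern p n x x * ∫ t in Icc (-1:ℝ) 1,
      (SKI.kpol ps n x).eval t * (SKI.kpol ps n x).eval t * w t := by
    have := SKI.eval_sq_le hwmeas hwint horth hdeg hKsxmem x
    rwa [SKI.kpol_eval ps n x x] at this
  -- now pure algebra
  set A := kern p n x x with hAdef
  set B := kern ps n x x with hBdef
  set By := kern ps n y y with hBydef
  set J := (∫ t in Icc (-1:ℝ) 1,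
      (SKI.kpol p n x).eval t * (SKI.kpol p n x).eval t * ws t) with hJdef
  set Iv := (∫ t in Icc (-1:ℝ) 1,
      (SKI.kpol p n x - SKI.kpol ps n x).eval t * (SKI.kpol p n x - SKI.kpol ps n x).eval t
        * ws t) with hIvdef
  set Ew := (∫ t in Icc (-1:ℝ) 1,
      (SKI.kpol ps n x).eval t * (SKI.kpol ps n x).eval t * w t) with hEwdef
  by_cases hBpos : 0 < B
  · have hAB : B ≤ (1+ε) * A := by
      nlinarith [hF8, hF5, hA0, hBpos, mul_le_mul_of_nonneg_left hF5 hA0]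
    have hIvB : Iv ≤ 2*ε*B := by
      nlinarith [hF6, hF4, hA0,
        mul_le_mul_of_nonneg_left hAB (by linarith : (0:ℝ) ≤ 1 - 2*ε),
        mul_nonneg (mul_nonneg hε0.le hε0.le) hA0]
    have hΔ2 : (kern p n x y - kern ps n x y)^2 ≤ 2*ε*(By*B) := by
      nlinarith [hF7, mul_le_mul_of_nonneg_left hIvB hBy0]
    rw [div_le_iff₀ hBpos]
    calc |kern p n x y - kern ps n x y| ≤ Real.sqrt (2*ε*(By*B)) := Real.abs_le_sqrt hΔ2
      _ = Real.sqrt (2*ε) * Real.sqrt (By/B) * B := by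
          rw [Real.sqrt_mul (by linarith : (0:ℝ) ≤ 2*ε),
            show By*B = (By/B)*B^2 by field_simp,
            Real.sqrt_mul (div_nonneg hBy0 hBpos.le), Real.sqrt_sq hBpos.le, mul_assoc]
  · have hBeq : B = 0 := le_antisymm (not_lt.1 hBpos) hB0
    rw [hBeq]
    simp
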